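/- arXiv:2311.02383 — 2 statements merged into one kernel-verified Lean document; each statement's English description precedes it below -/
import Mathlib

section
/- If a(n) ~ C·n^{−α} e^{c√n} as n → ∞ for constants C, c > 0 and α ∈ ℝ, then for all sufficiently large n₁ and n₂ (with min(n₁,n₂) → ∞), a(n₁)·a(n₂) > a(n₁+n₂). -/
open Filter

private lemma bo_sqrt_tendsto : Tendsto (fun n : ℕ => Real.sqrt n) atTop atTop := by
  refine ((tendsto_rpow_atTop (y := (1/2:ℝ)) (by norm_num)).comp
    tendsto_natCast_atTop_atTop).congr (fun n => ?_)
  simp [Function.comp, Real.sqrt_eq_rpow]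

private lemma bo_tendsto (C c β : ℝ) (hC : 0 < C) (hc : 0 < c) :
    Tendsto (fun n : ℕ => C * (n : ℝ) ^ (-β) * Real.exp (c * Real.sqrt n)) atTop atTop := by
  have h1 : Tendsto (fun n : ℕ => c * Real.sqrt n) atTop atTop :=
    bo_sqrt_tendsto.const_mul_atTop hc
  have h2 := (tendsto_exp_div_rpow_atTop (2 * β)).comp h1
  have h3 : Tendsto (fun n : ℕ =>
      (C * c ^ (2 * β)) * (Real.exp (c * Real.sqrt n) / (c * Real.sqrt n) ^ (2 * β)))
      atTop atTop := h2.const_mul_atTop (by positivity)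
  refine h3.congr' ?_
  filter_upwards [eventually_ge_atTop 1] with n hn
  have hn0 : (0:ℝ) < n := by exact_mod_cast Nat.pos_of_ne_zero (by omega)
  have hs : (0:ℝ) < Real.sqrt n := Real.sqrt_pos.mpr hn0
  have hpow : (c * Real.sqrt n) ^ (2 * β) = c ^ (2 * β) * (n : ℝ) ^ β := by
    rw [Real.mul_rpow hc.le hs.le]
    congr 1
    rw [Real.rpow_mul hs.le]
    congr 1
    rw [show ((2:ℝ)) = ((2:ℕ):ℝ) by norm_num, Real.rpow_natCast]
    exact Real.sq_sqrt hn0.le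
  rw [hpow, Real.rpow_neg hn0.le]
  have hnb : (0:ℝ) < (n:ℝ) ^ β := Real.rpow_pos_of_pos hn0 β
  field_simp

/-- Asymptotic Bessenrodt–Ono inequality: if `a(n) ~ C n^{−α} e^{c√n}` with `C, c > 0`, then
`a(n₁)a(n₂) > a(n₁+n₂)` for all sufficiently large `n₁, n₂`. -/
theorem bessenrodt_ono_asymptotic (a : ℕ → ℝ) (C c α : ℝ) (hC : 0 < C) (hc : 0 < c)
    (hpos : ∀ n, 0 < a n)
    (hasym : Tendsto (fun n : ℕ =>
        a n / (C * (n : ℝ) ^ (-α) * Real.exp (c * Real.sqrt n))) atTop (nhds 1)) :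
    ∃ N : ℕ, ∀ n₁ n₂ : ℕ, N ≤ n₁ → N ≤ n₂ → a (n₁ + n₂) < a n₁ * a n₂ := by
  set f : ℕ → ℝ := fun n => C * (n : ℝ) ^ (-α) * Real.exp (c * Real.sqrt n) with hf
  set β : ℝ := |α| with hβ
  -- ratio bounds
  have hrat : ∀ᶠ n in atTop, |a n / f n - 1| < 1/2 := by
    have := Metric.tendsto_nhds.mp hasym (1/2) (by norm_num)
    simpa [Real.dist_eq] using this
  obtain ⟨N₀, hN₀⟩ := eventually_atTop.mp hrat
  obtain ⟨N₁, hN₁⟩ := eventually_atTop.mp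
    ((bo_tendsto C (c/4) β hC (by positivity)).eventually_ge_atTop 8)
  refine ⟨max (max N₀ N₁) 2, ?_⟩
  have hfpos : ∀ n : ℕ, 1 ≤ n → 0 < f n := by
    intro n hn
    have hn0 : (0:ℝ) < n := by exact_mod_cast Nat.pos_of_ne_zero (by omega)
    simp only [hf]
    positivity
  have hbound : ∀ n : ℕ, max (max N₀ N₁) 2 ≤ n → f n / 2 < a n ∧ a n < 2 * f n := by
    intro n hn
    have h1 := hN₀ n (le_trans (le_trans (le_max_left _ _) (le_max_left _ _)) hn)
    have hfp := hfpos n (le_trans (by norm_num) (le_trans (le_max_right _ _) hn))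
    rw [abs_lt] at h1
    have hkey : a n / f n * f n = a n := div_mul_cancel₀ _ hfp.ne'
    constructor <;> nlinarith [h1.1, h1.2, hkey, hfp]
  -- key symmetric-case lemma
  suffices key : ∀ n₁ n₂ : ℕ, max (max N₀ N₁) 2 ≤ n₁ → max (max N₀ N₁) 2 ≤ n₂ →
      n₁ ≤ n₂ → a (n₁ + n₂) < a n₁ * a n₂ by
    intro n₁ n₂ h₁ h₂
    rcases le_total n₁ n₂ with h | h
    · exact key n₁ n₂ h₁ h₂ h
    · rw [Nat.add_comm, mul_comm]; exact key n₂ n₁ h₂ h₁ h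
  intro n₁ n₂ h₁ h₂ h12
  have h2n₁ : 2 ≤ n₁ := le_trans (le_max_right _ _) h₁
  have hc₁ : (2:ℝ) ≤ n₁ := by exact_mod_cast h2n₁
  have hc₂ : (n₁:ℝ) ≤ n₂ := by exact_mod_cast h12
  have hn₁0 : (0:ℝ) < n₁ := by linarith
  have hn₂0 : (0:ℝ) < n₂ := by linarith
  have hX : (0:ℝ) < (n₁:ℝ) + n₂ := by linarith
  set s₁ := Real.sqrt n₁ with hs₁
  set s₂ := Real.sqrt n₂ with hs₂
  set S := Real.sqrt ((n₁:ℝ) + n₂) with hS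
  have hs₁0 : 0 < s₁ := Real.sqrt_pos.mpr hn₁0
  have hs₂0 : 0 < s₂ := Real.sqrt_pos.mpr hn₂0
  have hs₁sq : s₁ ^ 2 = n₁ := Real.sq_sqrt hn₁0.le
  have hs₂sq : s₂ ^ 2 = n₂ := Real.sq_sqrt hn₂0.le
  have hs12 : s₁ ≤ s₂ := Real.sqrt_le_sqrt hc₂
  -- gap bound
  have hSle : S ≤ 3/4 * s₁ + s₂ := by
    have h := Real.sqrt_le_sqrt (show (n₁:ℝ) + n₂ ≤ (3/4 * s₁ + s₂) ^ 2 by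
      nlinarith [mul_le_mul_of_nonneg_left hs12 hs₁0.le])
    rwa [Real.sqrt_sq (by positivity)] at h
  -- harmonic mean
  set t : ℝ := (n₁ : ℝ) * n₂ / ((n₁:ℝ) + n₂) with ht
  have ht1 : 1 ≤ t := by
    rw [le_div_iff₀ hX]; nlinarith
  have ht2 : t ≤ (n₁ : ℝ) := by
    rw [div_le_iff₀ hX]; nlinarith
  have ht0 : 0 < t := by linarith
  have hteq : t ^ (-α) = (n₁:ℝ) ^ (-α) * (n₂:ℝ) ^ (-α) * ((n₁:ℝ) + n₂) ^ α := by
    rw [ht, Real.div_rpow (by positivity) hX.le, Real.mul_rpow hn₁0.le hn₂0.le,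
      Real.rpow_neg hX.le, div_eq_mul_inv, inv_inv]
  have hstep1 : (n₁:ℝ) ^ (-β) ≤ t ^ (-α) := by
    rcases le_or_gt 0 α with h | h
    · rw [hβ, abs_of_nonneg h]
      exact Real.rpow_le_rpow_of_nonpos ht0 ht2 (neg_nonpos.mpr h)
    · calc (n₁:ℝ) ^ (-β) ≤ 1 :=
            Real.rpow_le_one_of_one_le_of_nonpos (by linarith) (neg_nonpos.mpr (abs_nonneg α))
        _ ≤ t ^ (-α) := Real.one_le_rpow ht1 (by linarith)
  -- exponent bound
  have hexp : Real.exp (c/4 * s₁) ≤ Real.exp (c * (s₁ + s₂ - S)) := by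
    apply Real.exp_le_exp.mpr
    nlinarith
  -- bracket bound
  have h8 : (8:ℝ) ≤ C * (t ^ (-α)) * Real.exp (c * (s₁ + s₂ - S)) := by
    calc (8:ℝ) ≤ C * (n₁:ℝ) ^ (-β) * Real.exp (c/4 * s₁) :=
          hN₁ n₁ (le_trans (le_trans (le_max_right _ _) (le_max_left _ _)) h₁)
      _ ≤ C * (t ^ (-α)) * Real.exp (c * (s₁ + s₂ - S)) := by
          apply mul_le_mul (mul_le_mul_of_nonneg_left hstep1 hC.le) hexp
            (Real.exp_pos _).le (by positivity)
  -- product identity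
  have hcast : ((n₁ + n₂ : ℕ) : ℝ) = (n₁:ℝ) + n₂ := by push_cast; ring
  have hid : f n₁ * f n₂ =
      (C * (t ^ (-α)) * Real.exp (c * (s₁ + s₂ - S))) * f (n₁ + n₂) := by
    have e1 : ((n₁:ℝ) + n₂) ^ α * ((n₁:ℝ) + n₂) ^ (-α) = 1 := by
      rw [← Real.rpow_add hX]; simp
    have e2 : Real.exp (c * (s₁ + s₂ - S)) * Real.exp (c * S) =
        Real.exp (c * s₁) * Real.exp (c * s₂) := by
      rw [← Real.exp_add, ← Real.exp_add]; ring_nf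
    simp only [hf, hcast, hteq]
    calc C * (n₁:ℝ) ^ (-α) * Real.exp (c * s₁) * (C * (n₂:ℝ) ^ (-α) * Real.exp (c * s₂))
        = C * C * ((n₁:ℝ) ^ (-α) * (n₂:ℝ) ^ (-α)) *
          (Real.exp (c * s₁) * Real.exp (c * s₂)) := by ring
      _ = C * C * ((n₁:ℝ) ^ (-α) * (n₂:ℝ) ^ (-α)) *
          ((((n₁:ℝ) + n₂) ^ α * ((n₁:ℝ) + n₂) ^ (-α)) *
            (Real.exp (c * (s₁ + s₂ - S)) * Real.exp (c * S))) := by rw [e1, e2]; ring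
      _ = C * ((n₁:ℝ) ^ (-α) * (n₂:ℝ) ^ (-α) * (((n₁:ℝ) + n₂)) ^ α) *
          Real.exp (c * (s₁ + s₂ - S)) *
          (C * ((n₁:ℝ) + n₂) ^ (-α) * Real.exp (c * S)) := by ring
      _ = _ := by ring
  -- combine
  have hfS : 0 < f (n₁ + n₂) := hfpos _ (by omega)
  have hff : 8 * f (n₁ + n₂) ≤ f n₁ * f n₂ := by
    rw [hid]
    exact mul_le_mul_of_nonneg_right h8 hfS.le
  have hb₁ := hbound n₁ h₁
  have hb₂ := hbound n₂ h₂
  have hbS := (hbound (n₁ + n₂) (by omega)).2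
  have hfp₁ := hfpos n₁ (by omega)
  have hfp₂ := hfpos n₂ (by omega)
  calc a (n₁ + n₂) < 2 * f (n₁ + n₂) := hbS
    _ ≤ f n₁ * f n₂ / 4 := by linarith
    _ = (f n₁ / 2) * (f n₂ / 2) := by ring
    _ < a n₁ * a n₂ := mul_lt_mul'' hb₁.1 hb₂.1 (by linarith) (by linarith)
end

section
/- Minor arc bound: there is a constant 𝒞 > 0 such that for z = x + iy with 0 < x and Mx ≤ |y| < π (M > 0 fixed), as z → 0 one has |∏_{n≥1}(1−e^{−nz})^{−1}| ≤ x^{1/2} e^{π²/(6x) − 𝒞/x}. -/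
noncomputable def ww (z : ℂ) (n : ℕ) : ℂ := Complex.exp (-(((n : ℂ) + 1) * z))

lemma ww_norm (z : ℂ) (n : ℕ) : ‖ww z n‖ = Real.exp (-(((n : ℝ) + 1) * z.re)) := by
  rw [ww, Complex.norm_exp]
  congr 1
  simp [Complex.mul_re]

lemma ww_norm_lt (z : ℂ) (hx : 0 < z.re) (n : ℕ) : ‖ww z n‖ < 1 := by
  rw [ww_norm, Real.exp_lt_one_iff]
  have : (0:ℝ) ≤ (n:ℝ) := Nat.cast_nonneg n
  nlinarith

lemma one_sub_ww_ne (z : ℂ) (hx : 0 < z.re) (n : ℕ) : 1 - ww z n ≠ 0 := by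
  intro h
  have h1 : ww z n = 1 := by linear_combination -h
  have := ww_norm_lt z hx n
  rw [h1] at this; simp at this

lemma ww_pow (z : ℂ) (n k : ℕ) :
    (ww z n) ^ (k + 1) = Complex.exp (-((((n : ℂ) + 1) * ((k : ℂ) + 1)) * z)) := by
  rw [ww, ← Complex.exp_nat_mul]
  congr 1
  push_cast
  ring

lemma ww_pow_symm (z : ℂ) (n k : ℕ) : (ww z n) ^ (k + 1) = (ww z k) ^ (n + 1) := by
  rw [ww_pow, ww_pow]
  ring_nf

noncomputable def bb (z : ℂ) (n k : ℕ) : ℝ := ((ww z n) ^ (k + 1) / ((k : ℂ) + 1)).re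

lemma taylor_shifted (z : ℂ) (hx : 0 < z.re) (n : ℕ) :
    HasSum (fun k : ℕ => (ww z n) ^ (k + 1) / (((k : ℂ) + 1)))
      (-Complex.log (1 - ww z n)) := by
  have h1 : ‖-(ww z n)‖ < 1 := by rw [norm_neg]; exact ww_norm_lt z hx n
  have ht := (Complex.hasSum_taylorSeries_log h1).neg
  have hfun : (fun k : ℕ => -((-1:ℂ) ^ (k+1) * (-(ww z n)) ^ k / k))
      = fun k : ℕ => (ww z n) ^ k / (k : ℂ) := by
    funext k
    have hk : ((-1:ℂ)) ^ (k+1) * (-(ww z n)) ^ k = -((ww z n) ^ k) := by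
      rw [show (-(ww z n)) ^ k = (-1:ℂ) ^ k * (ww z n) ^ k from neg_pow _ _,
        ← mul_assoc, ← pow_add]
      have hodd : Odd (k + 1 + k) := ⟨k, by ring⟩
      rw [hodd.neg_one_pow]; ring
    rw [hk, neg_div, neg_neg]
  have hsum : (1 : ℂ) + -(ww z n) = 1 - ww z n := by ring
  rw [hfun, hsum] at ht
  -- ht : HasSum (fun k => (ww z n)^k / k) (-log (1 - ww z n))
  have h0 : (∑ i ∈ Finset.range 1, (ww z n) ^ i / (i : ℂ)) = 0 := by simp
  have h3 := (hasSum_nat_add_iff (f := fun k : ℕ => (ww z n) ^ k / (k : ℂ))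
      (g := -Complex.log (1 - ww z n)) 1).mpr (by rw [h0, add_zero]; exact ht)
  have heq : (fun k : ℕ => (ww z n) ^ (k+1) / (((k+1 : ℕ)) : ℂ))
      = fun k : ℕ => (ww z n) ^ (k+1) / ((k : ℂ) + 1) := by
    funext k; push_cast; ring_nf
  exact heq ▸ h3

lemma row_hasSum (z : ℂ) (hx : 0 < z.re) (n : ℕ) :
    HasSum (fun k => bb z n k) (-(Complex.log (1 - ww z n)).re) := by
  have := Complex.hasSum_re (taylor_shifted z hx n)
  simpa [bb, Complex.neg_re] using this

lemma col_hasSum (z : ℂ) (hx : 0 < z.re) (k : ℕ) :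
    HasSum (fun n => bb z n k)
      ((ww z k * (1 - ww z k)⁻¹ / ((k : ℂ) + 1)).re) := by
  have hg := hasSum_geometric_of_norm_lt_one (ww_norm_lt z hx k)
  have h1 := (hg.mul_left (ww z k)).div_const ((k : ℂ) + 1)
  have h2 := Complex.hasSum_re h1
  refine h2.congr_fun fun n => ?_
  rw [bb, ww_pow_symm z n k]
  congr 1
  rw [pow_succ]; ring

lemma bb_abs_le (z : ℂ) (hx : 0 < z.re) (n k : ℕ) :
    |bb z n k| ≤ Real.exp (-(z.re/2)) ^ (n+1) * Real.exp (-(z.re/2)) ^ (k+1) := by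
  have h1 : |bb z n k| ≤ ‖(ww z n) ^ (k+1) / ((k:ℂ)+1)‖ := by
    rw [bb]
    exact Complex.abs_re_le_norm _
  have h2 : ‖(ww z n) ^ (k+1) / ((k:ℂ)+1)‖ ≤ ‖ww z n‖ ^ (k+1) := by
    rw [norm_div, norm_pow]
    have hk1 : (1:ℝ) ≤ ‖((k:ℂ)+1)‖ := by
      have : ((k:ℂ)+1) = ((k+1 : ℕ) : ℂ) := by push_cast; ring
      rw [this, Complex.norm_natCast]
      exact_mod_cast Nat.one_le_iff_ne_zero.2 (Nat.succ_ne_zero k)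
    calc ‖ww z n‖ ^ (k+1) / ‖((k:ℂ)+1)‖ ≤ ‖ww z n‖ ^ (k+1) / 1 := by
          gcongr
      _ = ‖ww z n‖ ^ (k+1) := by rw [div_one]
  have h3 : ‖ww z n‖ ^ (k+1) ≤ Real.exp (-(z.re/2)) ^ (n+1) * Real.exp (-(z.re/2)) ^ (k+1) := by
    rw [ww_norm, ← Real.exp_nat_mul, ← Real.exp_nat_mul, ← Real.exp_nat_mul, ← Real.exp_add,
      Real.exp_le_exp]
    push_cast
    nlinarith [mul_nonneg (mul_nonneg (Nat.cast_nonneg (α := ℝ) n) (Nat.cast_nonneg (α := ℝ) k)) hx.le,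
      mul_nonneg (Nat.cast_nonneg (α := ℝ) n) hx.le, mul_nonneg (Nat.cast_nonneg (α := ℝ) k) hx.le]
  exact h1.trans (h2.trans h3)

lemma geom_succ_summable {r : ℝ} (h0 : 0 ≤ r) (h1 : r < 1) :
    Summable (fun n : ℕ => r ^ (n+1)) := by
  have := (summable_geometric_of_lt_one h0 h1).mul_left r
  refine this.congr fun n => ?_
  rw [pow_succ]; ring

lemma log_summable (z : ℂ) (hx : 0 < z.re) :
    Summable fun n => Complex.log (1 - ww z n) := by
  set r := Real.exp (-z.re) with hr
  have hr0 : 0 < r := Real.exp_pos _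
  have hr1 : r < 1 := Real.exp_lt_one_iff.2 (by linarith)
  have hwr : ∀ n : ℕ, ‖ww z n‖ = r ^ (n+1) := by
    intro n
    rw [ww_norm, hr, ← Real.exp_nat_mul, Real.exp_eq_exp]
    push_cast; ring
  apply Summable.of_norm_bounded (g := fun n => ((1 - r)⁻¹ / 2 + 1) * r ^ (n+1))
    ((geom_succ_summable hr0.le hr1).mul_left _)
  intro n
  have hlt : ‖-(ww z n)‖ < 1 := by rw [norm_neg]; exact ww_norm_lt z hx n
  have hb := Complex.norm_log_one_add_le hlt
  have h1s : (1:ℂ) + -(ww z n) = 1 - ww z n := by ring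
  rw [h1s, norm_neg] at hb
  refine hb.trans ?_
  rw [hwr]
  have ht0 : (0:ℝ) ≤ r ^ (n+1) := pow_nonneg hr0.le _
  have ht1 : r ^ (n+1) ≤ r := by
    calc r ^ (n+1) ≤ r ^ 1 := pow_le_pow_of_le_one hr0.le hr1.le (by omega)
    _ = r := pow_one r
  have hinv : (1 - r ^ (n+1))⁻¹ ≤ (1 - r)⁻¹ := by
    apply inv_anti₀ (by linarith)
    linarith
  have hinv0 : (0:ℝ) ≤ (1 - r)⁻¹ := inv_nonneg.2 (by linarith)
  calc (r ^ (n+1)) ^ 2 * (1 - r ^ (n+1))⁻¹ / 2 + r ^ (n+1)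
      ≤ r ^ (n+1) * (1 - r)⁻¹ / 2 + r ^ (n+1) := by
        have : (r ^ (n+1)) ^ 2 * (1 - r ^ (n+1))⁻¹ ≤ r ^ (n+1) * (1 - r)⁻¹ := by
          have h2 : (r ^ (n+1)) ^ 2 ≤ r ^ (n+1) := by nlinarith
          exact mul_le_mul h2 hinv (inv_nonneg.2 (by linarith)) ht0
        linarith
    _ = ((1 - r)⁻¹ / 2 + 1) * r ^ (n+1) := by ring

set_option maxHeartbeats 1000000 in
lemma bb_uncurry_summable (z : ℂ) (hx : 0 < z.re) :
    Summable (Function.uncurry (bb z)) := by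
  have hs0 : 0 < Real.exp (-(z.re/2)) := Real.exp_pos _
  have hs1 : Real.exp (-(z.re/2)) < 1 := Real.exp_lt_one_iff.2 (by linarith)
  have hg := geom_succ_summable hs0.le hs1
  have hB : Summable (fun p : ℕ × ℕ =>
      Real.exp (-(z.re/2)) ^ (p.1+1) * Real.exp (-(z.re/2)) ^ (p.2+1)) :=
    hg.mul_of_nonneg hg (fun n => pow_nonneg hs0.le _) (fun n => pow_nonneg hs0.le _)
  refine Summable.of_norm_bounded hB fun p => ?_
  simpa [Function.uncurry] using bb_abs_le z hx p.1 p.2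

lemma col_bound (z : ℂ) (hx : 0 < z.re) (k : ℕ) :
    (ww z k * (1 - ww z k)⁻¹ / ((k : ℂ) + 1)).re ≤ 1 / (((k:ℝ)+1)^2 * z.re) := by
  set x := z.re with hxd
  set t := ‖ww z k‖ with htd
  have ht1 : t < 1 := ww_norm_lt z hx k
  have ht0 : 0 < t := by rw [htd, ww_norm]; exact Real.exp_pos _
  have h1t : 0 < 1 - t := by linarith
  have hn1 : 1 - t ≤ ‖1 - ww z k‖ := by
    have h := norm_sub_norm_le (1 : ℂ) (ww z k)
    rw [norm_one] at h
    exact h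
  have hinv : ‖1 - ww z k‖⁻¹ ≤ (1 - t)⁻¹ := inv_anti₀ h1t hn1
  have hre : (ww z k * (1 - ww z k)⁻¹ / ((k : ℂ) + 1)).re
      ≤ t * (1 - t)⁻¹ / ((k:ℝ)+1) := by
    have h1 : (ww z k * (1 - ww z k)⁻¹ / ((k : ℂ) + 1)).re
        ≤ ‖ww z k * (1 - ww z k)⁻¹ / ((k : ℂ) + 1)‖ := by
      exact Complex.re_le_norm _
    refine h1.trans ?_
    rw [norm_div, norm_mul, norm_inv]
    have hkc : ‖((k:ℂ)+1)‖ = (k:ℝ)+1 := by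
      have h2 : ((k:ℂ)+1) = ((k+1 : ℕ) : ℂ) := by push_cast; ring
      rw [h2, Complex.norm_natCast]; push_cast; ring
    rw [hkc]
    have hk0 : (0:ℝ) < (k:ℝ)+1 := by positivity
    have hmul : t * ‖1 - ww z k‖⁻¹ ≤ t * (1 - t)⁻¹ :=
      mul_le_mul_of_nonneg_left hinv ht0.le
    exact (div_le_div_iff_of_pos_right hk0).2 hmul
  refine hre.trans ?_
  set u := ((k:ℝ)+1) * x with hud
  have hu0 : 0 < u := by positivity
  have htu : t = Real.exp (-u) := by
    rw [htd, ww_norm, hud]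
  have hE : u + 1 ≤ Real.exp u := Real.add_one_le_exp u
  have htE : t * Real.exp u = 1 := by
    rw [htu, ← Real.exp_add]; simp
  have key : t * (1 - t)⁻¹ ≤ 1 / u := by
    rw [← div_eq_mul_inv, div_le_div_iff₀ h1t hu0]
    nlinarith [mul_le_mul_of_nonneg_left hE ht0.le]
  have hk0 : (0:ℝ) < (k:ℝ)+1 := by positivity
  calc t * (1 - t)⁻¹ / ((k:ℝ)+1) ≤ (1/u) / ((k:ℝ)+1) :=
        (div_le_div_iff_of_pos_right hk0).2 key
    _ = 1 / (((k:ℝ)+1)^2 * x) := by rw [hud]; field_simp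

lemma tail_hasSum : HasSum (fun k : ℕ => 1/((k:ℝ)+2)^2) (Real.pi^2/6 - 1) := by
  have h0 : (∑ i ∈ Finset.range 2, (1:ℝ)/(i:ℝ)^2) = 1 := by
    norm_num [Finset.sum_range_succ]
  have h := (hasSum_nat_add_iff (f := fun n : ℕ => (1:ℝ)/(n:ℝ)^2)
      (g := Real.pi^2/6 - 1) 2).mpr (by rw [h0, sub_add_cancel]; exact hasSum_zeta_two)
  refine h.congr_fun fun k => ?_
  push_cast; ring

set_option maxHeartbeats 2000000 in
lemma col_zero_bound (M : ℝ) (hM : 0 < M) (z : ℂ) (hx : 0 < z.re)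
    (hMy : M * z.re ≤ |z.im|) (hyπ : |z.im| < Real.pi) :
    (ww z 0 * (1 - ww z 0)⁻¹ / (((0:ℕ) : ℂ) + 1)).re
      ≤ (Real.sqrt (1 + 4 * M^2 / Real.pi^2))⁻¹ / z.re := by
  have hπ := Real.pi_pos
  set x := z.re with hxd
  set y := z.im with hyd
  set E := Real.exp (-x) with hEd
  have hE0 : 0 < E := Real.exp_pos _
  have hE1 : E ≤ 1 := by rw [hEd]; exact Real.exp_le_one_iff.2 (by linarith)
  have hw0 : ww z 0 = Complex.exp (-z) := by
    rw [ww]; norm_num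
  have hre0 : (ww z 0).re = E * Real.cos y := by
    rw [hw0, Complex.exp_re]
    simp [Real.cos_neg, hEd]
    rfl
  have him0 : (ww z 0).im = -(E * Real.sin y) := by
    rw [hw0, Complex.exp_im]
    simp [Real.sin_neg, hEd]
    rfl
  have hnormsq : ‖1 - ww z 0‖^2 = (1 - E * Real.cos y)^2 + (E * Real.sin y)^2 := by
    rw [Complex.sq_norm, Complex.normSq_apply, Complex.sub_re,
      Complex.sub_im, Complex.one_re, Complex.one_im, hre0, him0]
    ring
  -- key quadratic estimate
  have hcos : Real.cos y ≤ 1 - 2/Real.pi^2 * y^2 := Real.cos_le_one_sub_mul_cos_sq hyπ.le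
  have hy2 : M^2 * x^2 ≤ y^2 := by
    have h1 : M * x ≤ |y| := hMy
    have h2 : 0 ≤ M * x := by positivity
    nlinarith [sq_abs y]
  have hEex : E * Real.exp x = 1 := by rw [hEd, ← Real.exp_add]; simp
  have hxE : x * E ≤ 1 - E := by
    nlinarith [Real.add_one_le_exp x, hE0]
  have hEE : E^2 ≤ E := by nlinarith
  have h2 : (1 - E * Real.cos y)^2 + (E * Real.sin y)^2
      = (1-E)^2 + 2*E*(1 - Real.cos y) := by
    linear_combination (E^2) * (Real.sin_sq_add_cos_sq y)
  have hsq : (x*E)^2 ≤ (1-E)^2 := by nlinarith [mul_pos hx hE0]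
  have hc2 : 2*E*(2/Real.pi^2 * y^2) ≤ 2*E*(1 - Real.cos y) :=
    mul_le_mul_of_nonneg_left (by linarith) (by linarith)
  have hprod : M^2*x^2*(E^2) ≤ y^2*E :=
    mul_le_mul hy2 hEE (sq_nonneg E) (by nlinarith [sq_abs y, abs_nonneg y])
  have hprod2 : (4/Real.pi^2) * (M^2*x^2*E^2) ≤ (4/Real.pi^2) * (y^2*E) :=
    mul_le_mul_of_nonneg_left hprod (by positivity)
  have hkey : (1 + 4*M^2/Real.pi^2) * (x*E)^2 ≤ ‖1 - ww z 0‖^2 := by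
    rw [hnormsq, h2]
    have hgoal : (1 + 4*M^2/Real.pi^2) * (x*E)^2
        = (x*E)^2 + 4/Real.pi^2 * (M^2*x^2*E^2) := by ring
    rw [hgoal]
    have hc2' : 4/Real.pi^2 * (y^2*E) ≤ 2*E*(1 - Real.cos y) := by
      refine le_trans (le_of_eq ?_) hc2
      ring
    linarith [hsq, hc2', hprod2]
  have hxE0 : 0 < x * E := mul_pos hx hE0
  have hsqrt : Real.sqrt (1 + 4*M^2/Real.pi^2) * (x*E) ≤ ‖1 - ww z 0‖ := by
    have h := Real.sqrt_le_sqrt hkey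
    rw [Real.sqrt_mul (by positivity), Real.sqrt_sq hxE0.le,
      Real.sqrt_sq (norm_nonneg _)] at h
    exact h
  have hs0 : 0 < Real.sqrt (1 + 4*M^2/Real.pi^2) := Real.sqrt_pos.2 (by positivity)
  have hn0 : 0 < ‖1 - ww z 0‖ := lt_of_lt_of_le (by positivity) hsqrt
  -- assemble
  have hA : (ww z 0 * (1 - ww z 0)⁻¹ / (((0:ℕ) : ℂ) + 1)).re ≤ E * ‖1 - ww z 0‖⁻¹ := by
    have h1 : (ww z 0 * (1 - ww z 0)⁻¹ / (((0:ℕ) : ℂ) + 1)).re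
        ≤ ‖ww z 0 * (1 - ww z 0)⁻¹ / (((0:ℕ) : ℂ) + 1)‖ := by
      exact Complex.re_le_norm _
    refine h1.trans ?_
    rw [norm_div, norm_mul, norm_inv]
    have : ‖(((0:ℕ):ℂ)+1)‖ = 1 := by norm_num
    rw [this, div_one]
    have hwnorm : ‖ww z 0‖ = E := by
      rw [ww_norm, hEd]; norm_num
      rfl
    rw [hwnorm]
  refine hA.trans ?_
  have hinv : ‖1 - ww z 0‖⁻¹ ≤ (Real.sqrt (1 + 4*M^2/Real.pi^2) * (x*E))⁻¹ :=
    inv_anti₀ (by positivity) hsqrt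
  calc E * ‖1 - ww z 0‖⁻¹ ≤ E * (Real.sqrt (1 + 4*M^2/Real.pi^2) * (x*E))⁻¹ :=
        mul_le_mul_of_nonneg_left hinv hE0.le
    _ = (Real.sqrt (1 + 4*M^2/Real.pi^2))⁻¹ / x := by
        field_simp

set_option maxHeartbeats 2000000 in
/-- Minor-arc bound: there is `𝒞 > 0` so that for `z = x + iy` with `0 < x`,
`Mx ≤ |y| < π` and `|z|` sufficiently small,
`|∏_{n≥1}(1−e^{−nz})⁻¹| ≤ x^{1/2} e^{π²/(6x) − 𝒞/x}`. -/
theorem euler_product_minor_arc (M : ℝ) (hM : 0 < M) :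
    ∃ C > (0 : ℝ), ∃ δ > (0 : ℝ), ∀ z : ℂ, 0 < z.re → M * z.re ≤ |z.im| →
      |z.im| < Real.pi → ‖z‖ ≤ δ →
      ‖(∏' n : ℕ, (1 - Complex.exp (-(((n : ℂ) + 1) * z))))⁻¹‖
        ≤ z.re ^ ((1 : ℝ) / 2) * Real.exp (Real.pi ^ 2 / (6 * z.re) - C / z.re) := by
  have hπ := Real.pi_pos
  have ha : 0 < 4 * M^2 / Real.pi^2 := by positivity
  have hsq1 : 1 < Real.sqrt (1 + 4 * M^2 / Real.pi^2) := by
    have h := Real.sqrt_lt_sqrt (by norm_num : (0:ℝ) ≤ 1) (by linarith : (1:ℝ) < 1 + 4 * M^2 / Real.pi^2)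
    simpa using h
  obtain ⟨ε, hεd⟩ : ∃ e : ℝ, e = 1 - (Real.sqrt (1 + 4 * M^2 / Real.pi^2))⁻¹ := ⟨_, rfl⟩
  have hsq0 : 0 < Real.sqrt (1 + 4 * M^2 / Real.pi^2) := by linarith
  have hε0 : 0 < ε := by
    have h1 : (Real.sqrt (1 + 4 * M^2 / Real.pi^2))⁻¹ < 1 := by
      rw [inv_lt_one_iff₀]; right; exact hsq1
    rw [hεd]; linarith
  have hε1 : ε < 1 := by
    have : 0 < (Real.sqrt (1 + 4 * M^2 / Real.pi^2))⁻¹ := inv_pos.2 hsq0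
    rw [hεd]; linarith
  refine ⟨ε/2, half_pos hε0, min 1 (ε^2/4), lt_min one_pos (by positivity), ?_⟩
  intro z hx hMy hyπ hz
  have hxδ : z.re ≤ min 1 (ε^2/4) := by
    refine le_trans ?_ hz
    exact Complex.re_le_norm z
  have hxε : z.re ≤ ε^2/4 := le_trans hxδ (min_le_right _ _)
  -- rewrite the product as an exponential
  have hlogs := log_summable z hx
  have hprod : (∏' n : ℕ, (1 - ww z n))
      = Complex.exp (∑' n, Complex.log (1 - ww z n)) := by
    have h := Complex.cexp_tsum_eq_tprod (f := fun n => 1 - ww z n)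
      (fun n => one_sub_ww_ne z hx n) hlogs
    exact h.symm
  have hnorm : ‖(∏' n : ℕ, (1 - ww z n))⁻¹‖
      = Real.exp (-(∑' n, Complex.log (1 - ww z n)).re) := by
    rw [norm_inv, hprod, Complex.norm_exp, ← Real.exp_neg]
  -- the double sum
  have hrow : ∀ n, ∑' k, bb z n k = -(Complex.log (1 - ww z n)).re :=
    fun n => (row_hasSum z hx n).tsum_eq
  have hcol : ∀ k, ∑' n, bb z n k = (ww z k * (1 - ww z k)⁻¹ / ((k:ℂ)+1)).re :=
    fun k => (col_hasSum z hx k).tsum_eq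
  have hAsum : Summable (fun k => (ww z k * (1 - ww z k)⁻¹ / ((k:ℂ)+1)).re) := by
    have h := (bb_uncurry_summable z hx).prod_symm.prod
    refine h.congr fun k => ?_
    exact hcol k
  have hswap : -(∑' n, Complex.log (1 - ww z n)).re
      = ∑' k, (ww z k * (1 - ww z k)⁻¹ / ((k:ℂ)+1)).re := by
    rw [Complex.re_tsum hlogs, ← tsum_neg]
    calc ∑' n, -(Complex.log (1 - ww z n)).re
        = ∑' n, ∑' k, bb z n k := tsum_congr fun n => (hrow n).symm
      _ = ∑' k, ∑' n, bb z n k := (Summable.tsum_comm (bb_uncurry_summable z hx)).symm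
      _ = _ := tsum_congr fun k => hcol k
  -- bound the sum
  have htail : ∑' k, (ww z (k+1) * (1 - ww z (k+1))⁻¹ / (((k+1:ℕ):ℂ)+1)).re
      ≤ (Real.pi^2/6 - 1) / z.re := by
    have hAs1 : Summable (fun k => (ww z (k+1) * (1 - ww z (k+1))⁻¹ / (((k+1:ℕ):ℂ)+1)).re) :=
      (summable_nat_add_iff 1).2 hAsum
    have hzs := tail_hasSum.div_const z.re
    have hb : ∀ k : ℕ, (ww z (k+1) * (1 - ww z (k+1))⁻¹ / (((k+1:ℕ):ℂ)+1)).re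
        ≤ 1/((k:ℝ)+2)^2 / z.re := by
      intro k
      have h := col_bound z hx (k+1)
      refine h.trans (le_of_eq ?_)
      push_cast
      rw [div_div]
      ring_nf
    calc ∑' k, (ww z (k+1) * (1 - ww z (k+1))⁻¹ / (((k+1:ℕ):ℂ)+1)).re
        ≤ ∑' k : ℕ, 1/((k:ℝ)+2)^2 / z.re := Summable.tsum_le_tsum hb hAs1 hzs.summable
      _ = (Real.pi^2/6 - 1) / z.re := hzs.tsum_eq
  have hsplit : (∑' k, (ww z k * (1 - ww z k)⁻¹ / ((k:ℂ)+1)).re)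
      = (ww z 0 * (1 - ww z 0)⁻¹ / (((0:ℕ):ℂ)+1)).re
        + ∑' k, (ww z (k+1) * (1 - ww z (k+1))⁻¹ / (((k+1:ℕ):ℂ)+1)).re := by
    exact Summable.tsum_eq_zero_add hAsum
  have hA0 := col_zero_bound M hM z hx hMy hyπ
  have hfinal : -(∑' n, Complex.log (1 - ww z n)).re
      ≤ Real.pi^2/(6*z.re) - ε/z.re := by
    rw [hswap, hsplit]
    have hinveq : (Real.sqrt (1 + 4 * M^2 / Real.pi^2))⁻¹ = 1 - ε := by rw [hεd]; ring
    have hxne : z.re ≠ 0 := ne_of_gt hx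
    have heq : (1-ε)/z.re + (Real.pi^2/6 - 1)/z.re = Real.pi^2/(6*z.re) - ε/z.re := by
      field_simp
      ring
    rw [hinveq] at hA0
    linarith [hA0, htail]
  -- final comparison
  rw [show (fun n : ℕ => 1 - Complex.exp (-(((n : ℂ) + 1) * z))) = fun n => 1 - ww z n from rfl,
    hnorm]
  have hrp : z.re ^ ((1:ℝ)/2) = Real.sqrt z.re := (Real.sqrt_eq_rpow _).symm
  have hsx : 0 < Real.sqrt z.re := Real.sqrt_pos.2 hx
  have hs : Real.exp (-(ε/2/z.re)) ≤ Real.sqrt z.re := by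
    rw [← Real.exp_log hsx, Real.exp_le_exp, Real.log_sqrt hx.le]
    have hsqx : Real.sqrt z.re * Real.sqrt z.re = z.re := Real.mul_self_sqrt hx.le
    have hlog : -Real.log z.re ≤ 2 / Real.sqrt z.re := by
      have h1 : Real.log (Real.sqrt z.re)⁻¹ ≤ (Real.sqrt z.re)⁻¹ - 1 :=
        Real.log_le_sub_one_of_pos (inv_pos.2 hsx)
      rw [Real.log_inv, Real.log_sqrt hx.le] at h1
      have h2 : (Real.sqrt z.re)⁻¹ = 1 / Real.sqrt z.re := by rw [one_div]
      rw [h2] at h1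
      have h4 : 2 / Real.sqrt z.re = 2 * (1 / Real.sqrt z.re) := by ring
      linarith
    have h2 : Real.sqrt z.re ≤ ε/2 := by
      have h := Real.sqrt_le_sqrt hxε
      calc Real.sqrt z.re ≤ Real.sqrt (ε^2/4) := h
        _ = ε/2 := by
            rw [show ε^2/4 = (ε/2)^2 by ring, Real.sqrt_sq (by linarith)]
    have h3 : -Real.log z.re * z.re ≤ (2 / Real.sqrt z.re) * z.re :=
      mul_le_mul_of_nonneg_right hlog hx.le
    have h4 : (2 / Real.sqrt z.re) * z.re = 2 * Real.sqrt z.re := by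
      rw [div_mul_eq_mul_div, div_eq_iff (ne_of_gt hsx)]
      linear_combination -2 * hsqx
    have h5 : -ε ≤ Real.log z.re * z.re := by
      rw [h4] at h3
      linarith
    have h6 : -(ε/2/z.re) = -ε/(2*z.re) := by ring
    rw [h6, div_le_div_iff₀ (by linarith) (by norm_num : (0:ℝ) < 2)]
    linarith
  calc Real.exp (-(∑' n, Complex.log (1 - ww z n)).re)
      ≤ Real.exp (Real.pi^2/(6*z.re) - ε/z.re) := Real.exp_le_exp.2 hfinal
    _ = Real.exp (-(ε/2/z.re)) * Real.exp (Real.pi^2/(6*z.re) - ε/2/z.re) := by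
        rw [← Real.exp_add]; congr 1; ring
    _ ≤ z.re ^ ((1:ℝ)/2) * Real.exp (Real.pi^2/(6*z.re) - ε/2/z.re) := by
        rw [hrp]
        exact mul_le_mul_of_nonneg_right hs (Real.exp_nonneg _)
end
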